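/- Let κ be a field. For all s, r ∈ ℝ≥0, the first Tor module Tor₁^{κ[ℝ₊]}(κ[ℝ₊] ⧸ Ideal.span {T^s}, κ[ℝ₊] ⧸ Ideal.span {T^r}), computed in the category of κ[ℝ₊]-modules, is isomorphic to κ[ℝ₊] ⧸ Ideal.span {T^(min s r)}. -/

import Mathlib

open CategoryTheory
open scoped NNReal

noncomputable section

/-- The ring `κ[ℝ₊]` of polynomials with coefficients in `κ` and exponents in `ℝ≥0`,
realized as the monoid algebra of the additive monoid `ℝ≥0` over `κ`. -/
abbrev PersRing (κ : Type) [Field κ] : Type := AddMonoidAlgebra κ ℝ≥0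

namespace TorBar

open CategoryTheory Limits ZeroObject

variable {κ : Type} [Field κ]

abbrev τ (κ : Type) [Field κ] (t : ℝ≥0) : PersRing κ := AddMonoidAlgebra.single t (1 : κ)

lemma tau_mul (a b : ℝ≥0) : τ κ a * τ κ b = τ κ (a + b) := by
  rw [AddMonoidAlgebra.single_mul_single, one_mul]

lemma tau_zero : τ κ 0 = 1 := rfl

lemma tau_ne_zero (a : ℝ≥0) : τ κ a ≠ 0 := by
  exact AddMonoidAlgebra.single_ne_zero.mpr one_ne_zero

lemma tau_dvd_tau {a b : ℝ≥0} (h : a ≤ b) : τ κ a ∣ τ κ b :=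
  ⟨τ κ (b - a), by rw [tau_mul, add_tsub_cancel_of_le h]⟩

lemma tau_dvd_mul_iff (a b : ℝ≥0) (x : PersRing κ) :
    τ κ a ∣ τ κ b * x ↔ τ κ (a - b) ∣ x := by
  constructor
  · rintro ⟨y, hy⟩
    rcases le_total a b with hab | hab
    · rw [tsub_eq_zero_of_le hab, tau_zero]; exact one_dvd _
    · refine ⟨y, ?_⟩
      have h1 : τ κ b * x = τ κ b * (τ κ (a - b) * y) := by
        rw [hy, ← mul_assoc, tau_mul, add_tsub_cancel_of_le hab]
      exact mul_left_cancel₀ (tau_ne_zero b) h1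
  · rintro ⟨y, hy⟩
    refine dvd_trans (tau_dvd_tau (le_add_tsub : a ≤ b + (a - b))) ⟨y, ?_⟩
    rw [hy, ← mul_assoc, tau_mul]

lemma tsub_tsub_min (s r : ℝ≥0) : s - (s - r) = min s r := by
  rcases le_total r s with h | h
  · rw [tsub_tsub_cancel_of_le h, min_eq_right h]
  · rw [tsub_eq_zero_of_le h, tsub_zero, min_eq_left h]

variable (κ)

/-- the ideal `(T^t)` -/
abbrev I (t : ℝ≥0) : Ideal (PersRing κ) := Ideal.span {τ κ t}

/-- multiplication by `T^r` on `R ⧸ (T^s)` -/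
def μ (s r : ℝ≥0) : (PersRing κ ⧸ I κ s) →ₗ[PersRing κ] (PersRing κ ⧸ I κ s) :=
  τ κ r • LinearMap.id

lemma mem_ker_mu_iff (s r : ℝ≥0) (u : PersRing κ) :
    (I κ s).mkQ u ∈ LinearMap.ker (μ κ s r) ↔ τ κ (s - r) ∣ u := by
  rw [LinearMap.mem_ker]
  show τ κ r • (I κ s).mkQ u = 0 ↔ _
  rw [← map_smul, smul_eq_mul, Submodule.mkQ_apply, Submodule.Quotient.mk_eq_zero,
    Ideal.mem_span_singleton, tau_dvd_mul_iff]

/-- the map `R →ₗ ker μ`, `x ↦ mk (x * T^(s-r))` -/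
def ψ (s r : ℝ≥0) : PersRing κ →ₗ[PersRing κ] LinearMap.ker (μ κ s r) :=
  LinearMap.codRestrict _ ((I κ s).mkQ ∘ₗ LinearMap.toSpanSingleton _ _ (τ κ (s - r)))
    (fun x => by
      rw [LinearMap.comp_apply, LinearMap.toSpanSingleton_apply, smul_eq_mul,
        mem_ker_mu_iff κ s r]
      exact Dvd.intro_left x rfl)

lemma psi_surjective (s r : ℝ≥0) : Function.Surjective (ψ κ s r) := by
  rintro ⟨q, hq⟩
  obtain ⟨u, rfl⟩ := (I κ s).mkQ_surjective q
  obtain ⟨y, rfl⟩ := (mem_ker_mu_iff κ s r u).1 hq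
  refine ⟨y, Subtype.ext ?_⟩
  show (I κ s).mkQ (y • τ κ (s - r)) = (I κ s).mkQ (τ κ (s - r) * y)
  rw [smul_eq_mul, mul_comm]

lemma ker_psi (s r : ℝ≥0) : LinearMap.ker (ψ κ s r) = I κ (min s r) := by
  ext x
  rw [LinearMap.mem_ker]
  have : ψ κ s r x = 0 ↔ (I κ s).mkQ (x * τ κ (s - r)) = 0 := by
    constructor
    · intro h; exact congrArg Subtype.val h
    · intro h; exact Subtype.ext h
  rw [this, Submodule.mkQ_apply, Submodule.Quotient.mk_eq_zero, Ideal.mem_span_singleton,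
    mul_comm, tau_dvd_mul_iff, tsub_tsub_min, ← Ideal.mem_span_singleton]

/-- the key algebraic identification -/
def quotEquivKer (s r : ℝ≥0) :
    (PersRing κ ⧸ I κ (min s r)) ≃ₗ[PersRing κ] LinearMap.ker (μ κ s r) :=
  (Submodule.quotEquivOfEq _ _ (ker_psi κ s r).symm).trans
    ((ψ κ s r).quotKerEquivOfSurjective (psi_surjective κ s r))


section Resolution

open HomologicalComplex

variable (r : ℝ≥0)

/-- the degreewise objects of the resolution -/
def barX : ℕ → ModuleCat (PersRing κ)
  | 0 => ModuleCat.of (PersRing κ) (PersRing κ)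
  | 1 => ModuleCat.of (PersRing κ) (PersRing κ)
  | _ => 0

/-- multiplication by `T^r` on `R`, `x ↦ x * T^r` -/
def mulTau : ModuleCat.of (PersRing κ) (PersRing κ) ⟶ ModuleCat.of (PersRing κ) (PersRing κ) :=
  ModuleCat.ofHom (LinearMap.toSpanSingleton (PersRing κ) (PersRing κ) (τ κ r))

lemma mulTau_apply (x : PersRing κ) : mulTau κ r x = x * τ κ r := by
  show x • τ κ r = x * τ κ r
  rw [smul_eq_mul]

lemma mulTau_injective : Function.Injective (mulTau κ r) := by
  intro x y h
  rw [mulTau_apply, mulTau_apply] at h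
  exact mul_right_cancel₀ (M₀ := PersRing κ) (tau_ne_zero r) h

/-- the differentials -/
def barD : ∀ n : ℕ, barX κ (n + 1) ⟶ barX κ n
  | 0 => mulTau κ r
  | (_ + 1) => 0

/-- the resolution complex `⋯ → 0 → R → R` -/
def barC : ChainComplex (ModuleCat (PersRing κ)) ℕ :=
  ChainComplex.of (barX κ) (barD κ r)
    (fun n => by rw [show barD κ r (n + 1) = 0 from rfl]; exact Limits.zero_comp)

lemma barC_d_one_zero : (barC κ r).d 1 0 = mulTau κ r :=
  ChainComplex.of_d (barX κ) (barD κ r) 0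

lemma barC_d_succ_succ (n : ℕ) : (barC κ r).d (n + 2) (n + 1) = 0 :=
  ChainComplex.of_d (barX κ) (barD κ r) (n + 1)

instance barC_projective (n : ℕ) : Projective ((barC κ r).X n) := by
  match n with
  | 0 => exact (IsProjective.iff_projective _).mp inferInstance
  | 1 => exact (IsProjective.iff_projective _).mp inferInstance
  | (n + 2) => exact (inferInstance : Projective (0 : ModuleCat (PersRing κ)))

/-- the bar `R ⧸ (T^t)` as an object of `ModuleCat R` -/
abbrev barM (t : ℝ≥0) : ModuleCat (PersRing κ) :=
  ModuleCat.of (PersRing κ) (PersRing κ ⧸ I κ t)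

lemma mulTau_mkQ : mulTau κ r ≫ ModuleCat.ofHom (I κ r).mkQ = 0 := by
  ext : 1
  apply LinearMap.ext; intro x
  show (I κ r).mkQ (mulTau κ r x) = 0
  rw [mulTau_apply, Submodule.mkQ_apply, Submodule.Quotient.mk_eq_zero,
    Ideal.mem_span_singleton]
  exact Dvd.intro_left x rfl

/-- the short exact tail of the resolution -/
def tailSC : ShortComplex (ModuleCat (PersRing κ)) :=
  ShortComplex.mk (mulTau κ r) (ModuleCat.ofHom (I κ r).mkQ) (mulTau_mkQ κ r)

lemma tailSC_exact : (tailSC κ r).Exact := by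
  rw [ShortComplex.moduleCat_exact_iff]
  intro x hx
  have hx' : (x : PersRing κ) ∈ I κ r := by
    rw [show (tailSC κ r).g x = (I κ r).mkQ x from rfl] at hx
    exact (Submodule.Quotient.mk_eq_zero _).1 hx
  obtain ⟨y, hy⟩ := Ideal.mem_span_singleton.1 hx'
  exact ⟨y, by rw [show (tailSC κ r).f y = mulTau κ r y from rfl, mulTau_apply,
    mul_comm, ← hy]⟩

instance tailSC_epi : Epi (tailSC κ r).g :=
  (ModuleCat.epi_iff_surjective _).2 (I κ r).mkQ_surjective

/-- the complex with the zero object on the left and `mulTau` on the right -/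
def kerSC : ShortComplex (ModuleCat (PersRing κ)) :=
  ShortComplex.mk (0 : (0 : ModuleCat (PersRing κ)) ⟶ ModuleCat.of (PersRing κ) (PersRing κ))
    (mulTau κ r) Limits.zero_comp

lemma kerSC_exact : (kerSC κ r).Exact := by
  rw [ShortComplex.moduleCat_exact_iff]
  intro x hx
  refine ⟨0, ?_⟩
  rw [map_zero]
  have : mulTau κ r x = mulTau κ r 0 := by rw [map_zero]; exact hx
  exact (mulTau_injective κ r this).symm

/-- the projective resolution of the bar -/
def barRes : ProjectiveResolution (barM κ r) where
  complex := barC κ r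
  π := (ChainComplex.toSingle₀Equiv _ _).symm ⟨ModuleCat.ofHom (I κ r).mkQ, by
    rw [barC_d_one_zero]; exact mulTau_mkQ κ r⟩
  quasiIso := ⟨fun n => by
    cases n with
    | zero =>
      rw [ChainComplex.quasiIsoAt₀_iff, ShortComplex.quasiIso_iff_of_zeros']
      rotate_left
      · rfl
      · rfl
      · rfl
      refine (ShortComplex.exact_and_epi_g_iff_of_iso ?_).2
        ⟨tailSC_exact κ r, tailSC_epi κ r⟩
      refine ShortComplex.isoMk (Iso.refl _) (Iso.refl _) (Iso.refl _) ?_ ?_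
      · dsimp [tailSC]
        simp [barC_d_one_zero]
        exact (Category.id_comp _).trans (Category.comp_id _).symm
      · dsimp [tailSC]
        simp
        rfl
    | succ n =>
      rw [quasiIsoAt_iff_exactAt' _ _ (ChainComplex.exactAt_succ_single_obj _ _)]
      rw [HomologicalComplex.exactAt_iff' _ (n + 2) (n + 1) n (by simp) (by simp)]
      cases n with
      | zero =>
        refine ShortComplex.exact_of_iso ?_ (kerSC_exact κ r)
        refine ShortComplex.isoMk (Iso.refl _) (Iso.refl _) (Iso.refl _) ?_ ?_
        · dsimp [kerSC]
          simp [barC_d_succ_succ]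
          exact Limits.zero_comp.trans Limits.zero_comp.symm
        · dsimp [kerSC]
          simp [barC_d_one_zero]
          exact (Category.id_comp _).trans (Category.comp_id _).symm
      | succ m =>
        exact ShortComplex.exact_of_isZero_X₂ _ (Limits.isZero_zero _)⟩

end Resolution


section Main

open HomologicalComplex MonoidalCategory
open scoped TensorProduct

set_option maxHeartbeats 1000000
set_option synthInstance.maxHeartbeats 1000000

variable (s r : ℝ≥0)

/-- tensoring with the bar `R ⧸ (T^s)` -/
abbrev F : ModuleCat (PersRing κ) ⥤ ModuleCat (PersRing κ) :=
  (tensoringLeft (ModuleCat (PersRing κ))).obj (barM κ s)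

/-- the mapped complex -/
abbrev K : ChainComplex (ModuleCat (PersRing κ)) ℕ :=
  ((F κ s).mapHomologicalComplex (ComplexShape.down ℕ)).obj (barC κ r)

/-- the short complex computing `Tor₁` -/
abbrev S : ShortComplex (ModuleCat (PersRing κ)) := (K κ s r).sc' 2 1 0

lemma hSf : (S κ s r).f = 0 := by
  show (F κ s).map ((barC κ r).d 2 1) = 0
  rw [barC_d_succ_succ, Functor.map_zero]

lemma hSg : (S κ s r).g = (F κ s).map (mulTau κ r) := by
  show (F κ s).map ((barC κ r).d 1 0) = _
  rw [barC_d_one_zero]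
  rfl

/-- the right unitor as a linear equivalence -/
abbrev eRid : ((PersRing κ ⧸ I κ s) ⊗[PersRing κ] (PersRing κ)) ≃ₗ[PersRing κ]
    (PersRing κ ⧸ I κ s) :=
  TensorProduct.rid (PersRing κ) (PersRing κ ⧸ I κ s)

lemma hcomm (z : (PersRing κ ⧸ I κ s) ⊗[PersRing κ] (PersRing κ)) :
    eRid κ s ((S κ s r).g z) = μ κ s r (eRid κ s z) := by
  induction z using TensorProduct.induction_on with
  | zero => erw [map_zero, map_zero]
  | tmul x y =>
    rw [hSg]
    have h1 : ((F κ s).map (mulTau κ r)) (x ⊗ₜ y) = x ⊗ₜ[PersRing κ] (mulTau κ r y) :=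
      ModuleCat.MonoidalCategory.whiskerLeft_apply _ _ _ _
    erw [h1, TensorProduct.rid_tmul, TensorProduct.rid_tmul, mulTau_apply]
    show (y * τ κ r) • x = μ κ s r (y • x)
    rw [mul_comm, mul_smul]
    rfl
  | add a b ha hb => rw [map_add, map_add]; erw [map_add (S κ s r).g.hom, map_add (eRid κ s), ha, hb]

lemma ker_map : (LinearMap.ker (S κ s r).g.hom).map
    (eRid κ s).toLinearMap = LinearMap.ker (μ κ s r) := by
  ext n
  simp only [Submodule.mem_map, LinearMap.mem_ker]
  constructor
  · rintro ⟨z, hz, rfl⟩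
    have h := hcomm κ s r z
    rw [hz] at h; erw [map_zero] at h
    exact h.symm
  · intro hn
    refine ⟨(eRid κ s).symm n, ?_, (eRid κ s).apply_symm_apply n⟩
    have h := hcomm κ s r ((eRid κ s).symm n)
    rw [LinearEquiv.apply_symm_apply, hn] at h
    exact (LinearEquiv.map_eq_zero_iff _).1 h

lemma range_toCycles : LinearMap.range (S κ s r).moduleCatToCycles = ⊥ := by
  rw [LinearMap.range_eq_bot]
  apply LinearMap.ext
  intro x
  apply Subtype.ext
  rw [show ((S κ s r).moduleCatToCycles x : (S κ s r).X₂) = (S κ s r).f.hom x from rfl, hSf]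
  rfl

/-- final identification of the homology -/
def homologyEquiv : (LinearMap.ker (S κ s r).g.hom ⧸
      LinearMap.range (S κ s r).moduleCatToCycles)
    ≃ₗ[PersRing κ] (PersRing κ ⧸ I κ (min s r)) :=
  (Submodule.quotEquivOfEqBot _ (range_toCycles κ s r)).trans
    ((LinearEquiv.ofSubmodules (show (S κ s r).X₂ ≃ₗ[PersRing κ] (PersRing κ ⧸ I κ s) from eRid κ s) _ _ (ker_map κ s r)).trans
      (quotEquivKer κ s r).symm)

/-- the full chain of isomorphisms -/
def torIso : (((Tor (ModuleCat (PersRing κ)) 1).obj (barM κ s)).obj (barM κ r))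
    ≅ barM κ (min s r) :=
  (barRes κ r).isoLeftDerivedObj (F κ s) 1 ≪≫
    (K κ s r).homologyIsoSc' 2 1 0 (by simp) (by simp) ≪≫
    (S κ s r).moduleCatHomologyIso ≪≫
    (homologyEquiv κ s r).toModuleIso

end Main

end TorBar

/-- **Tor of bars (Proposition 2.8, formula (5)).**  For `s, r ∈ ℝ≥0`, the first Tor module
`Tor₁(κ[ℝ₊] ⧸ (T^s), κ[ℝ₊] ⧸ (T^r))`, computed in the category of `κ[ℝ₊]`-modules, is
isomorphic to the bar `κ[ℝ₊] ⧸ (T^(min s r))`. -/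
theorem tor_one_bar_bar (κ : Type) [Field κ] (s r : ℝ≥0) :
    Nonempty
      ((((Tor (ModuleCat (PersRing κ)) 1).obj
          (ModuleCat.of (PersRing κ)
            (PersRing κ ⧸ Ideal.span {AddMonoidAlgebra.single s (1 : κ)}))).obj
          (ModuleCat.of (PersRing κ)
            (PersRing κ ⧸ Ideal.span {AddMonoidAlgebra.single r (1 : κ)})))
        ≅ ModuleCat.of (PersRing κ)
            (PersRing κ ⧸ Ideal.span {AddMonoidAlgebra.single (min s r) (1 : κ)})) :=
  ⟨TorBar.torIso κ s r⟩

end
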